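/- Let N be an acyclic CP-net with induced flip-based preference ≻, outcomes o₁ = R·x₁·o₁′, o₂ = R·x₂·o₂′ sharing ancestor assignment R at X with x₁ ≻ x₂ given R. Let N₁, N₂ be the sub-CP-nets restricted to R·x₁ and R·x₂ with induced preferences ≻₁, ≻₂. If there exists a partial assignment o₃′ to the remaining variables with o₃′ ≻₂ o₂′ and o₁′ ≻₁ o₃′, then o₁ ≻ o₂. -/

import Mathlib

theorem stmt_16 {n : ℕ} (D : Fin n → Type) [∀ i, Finite (D i)]
    (Pa : Fin n → Set (Fin n)) (hPa : ∀ i j, j ∈ Pa i → j < i)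
    (r : ∀ i : Fin n, (∀ j, D j) → D i → D i → Prop)
    (hdep : ∀ i o o', (∀ j ∈ Pa i, o j = o' j) → ∀ a b, (r i o a b ↔ r i o' a b))
    (hirr : ∀ i o a, ¬ r i o a a)
    (htrans : ∀ i o a b c, r i o a b → r i o b c → r i o a c)
    (htotal : ∀ i o (a b : D i), a ≠ b → r i o a b ∨ r i o b a)
    (flip : (∀ j, D j) → (∀ j, D j) → Prop)
    (hflip : ∀ a b, flip a b ↔ ∃ i, (∀ j, j ≠ i → a j = b j) ∧ r i b (a i) (b i))
    (pref : (∀ j, D j) → (∀ j, D j) → Prop)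
    (hpref : ∀ a b, pref a b ↔ Relation.TransGen flip a b)
(flipA : Fin n → (∀ j, D j) → (∀ j, D j) → Prop)
    (hflipA : ∀ k a b, flipA k a b ↔
      ∃ i, k < i ∧ (∀ j, j ≠ i → a j = b j) ∧ r i b (a i) (b i))
    (o₁ o₂ : ∀ j, D j) (k : Fin n)
    (hR : ∀ j, j < k → o₁ j = o₂ j)
    (hx : r k o₂ (o₁ k) (o₂ k))
    (o₃ : ∀ j, D j) (hpre3 : ∀ j, j < k → o₃ j = o₂ j)
    (h2 : Relation.TransGen (flipA k) (Function.update o₃ k (o₂ k)) o₂)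
    (h1 : Relation.TransGen (flipA k) o₁ (Function.update o₃ k (o₁ k))) :
    pref o₁ o₂ := by
  have hsub : ∀ a b, flipA k a b → flip a b := by
    intro a b hab
    rw [hflipA] at hab
    obtain ⟨i, _, h⟩ := hab
    exact (hflip a b).mpr ⟨i, h⟩
  have h1' : Relation.TransGen flip o₁ (Function.update o₃ k (o₁ k)) :=
    Relation.TransGen.mono hsub _ _ h1
  have h2' : Relation.TransGen flip (Function.update o₃ k (o₂ k)) o₂ :=
    Relation.TransGen.mono hsub _ _ h2
  have hmid : flip (Function.update o₃ k (o₁ k)) (Function.update o₃ k (o₂ k)) := by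
    rw [hflip]
    refine ⟨k, ?_, ?_⟩
    · intro j hj
      simp [Function.update_of_ne hj]
    · simp only [Function.update_self]
      have := hdep k o₂ (Function.update o₃ k (o₂ k)) ?_ (o₁ k) (o₂ k)
      · exact this.mp hx
      · intro j hj
        have hlt := hPa k j hj
        have hne : j ≠ k := Fin.ne_of_lt hlt
        rw [Function.update_of_ne hne]
        exact (hpre3 j hlt).symm
  rw [hpref]
  exact (h1'.tail hmid).trans h2'
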